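/- (Eq. (48): choice of τ achieving permissible error ε) For every ε > 0, setting τ = (1−p_g)/(√(2e)·p_g·ε) if ε > ((1−p_g)/(√e·p_g))·Δ, and τ = (1/Δ)·√(ln((1−p_g)·Δ/(p_g·ε))) if ε ≤ ((1−p_g)/(√e·p_g))·Δ, one has ((1−p_g)/p_g)·e^{−Δ̃(τ)²τ²}·Δ̃(τ) ≤ ε, where Δ̃(τ) = max{Δ, (√2·τ)^{−1}}. -/

import Mathlib

/-- (Eq. (48): choice of `τ` achieving permissible error `ε`) For `0 < p_g < 1`, `Δ > 0`
and any `ε > 0`, setting `τ = (1−p_g)/(√(2e)·p_g·ε)` if `ε > ((1−p_g)/(√e·p_g))·Δ`, and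
`τ = (1/Δ)·√(ln((1−p_g)·Δ/(p_g·ε)))` otherwise, one has
`((1−p_g)/p_g)·e^{−Δ̃(τ)²τ²}·Δ̃(τ) ≤ ε`, where `Δ̃(τ) = max{Δ, (√2·τ)⁻¹}`. -/
theorem stmt14 (p_g Δ ε : ℝ) (hp0 : 0 < p_g) (hp1 : p_g < 1) (hΔ : 0 < Δ) (hε : 0 < ε)
    (τ : ℝ)
    (hτ : τ = if (1 - p_g) / (Real.sqrt (Real.exp 1) * p_g) * Δ < ε
        then (1 - p_g) / (Real.sqrt (2 * Real.exp 1) * p_g * ε)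
        else (1 / Δ) * Real.sqrt (Real.log ((1 - p_g) * Δ / (p_g * ε)))) :
    (1 - p_g) / p_g *
        Real.exp (-(max Δ (Real.sqrt 2 * τ)⁻¹) ^ 2 * τ ^ 2) *
        max Δ (Real.sqrt 2 * τ)⁻¹ ≤ ε := by
  have hq : 0 < 1 - p_g := by linarith
  have hse : Real.sqrt (Real.exp 1) = Real.exp (1 / 2) := (Real.exp_half 1).symm
  have hsepos : 0 < Real.sqrt (Real.exp 1) := Real.sqrt_pos.2 (Real.exp_pos 1)
  have hs2 : (0:ℝ) < Real.sqrt 2 := Real.sqrt_pos.2 (by norm_num)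
  have hs2sq : Real.sqrt 2 * Real.sqrt 2 = 2 := Real.mul_self_sqrt (by norm_num)
  set se := Real.sqrt (Real.exp 1) with hse_def
  set s2 := Real.sqrt 2 with hs2_def
  split_ifs at hτ with h
  · -- case ε large
    have hτpos : 0 < τ := by
      rw [hτ]
      have : Real.sqrt (2 * Real.exp 1) > 0 := Real.sqrt_pos.2 (by positivity)
      positivity
    have hsqrt2e : Real.sqrt (2 * Real.exp 1) = s2 * se := by
      rw [hs2_def, hse_def, ← Real.sqrt_mul (by norm_num)]
    rw [hsqrt2e] at hτ
    have hs2τ : s2 * τ = (1 - p_g) / (se * p_g * ε) := by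
      rw [hτ]; field_simp
    have hinv : (s2 * τ)⁻¹ = se * p_g * ε / (1 - p_g) := by
      rw [hs2τ]; field_simp
    have hmax : max Δ (s2 * τ)⁻¹ = (s2 * τ)⁻¹ := by
      apply max_eq_right
      rw [hinv]
      have h' : (1 - p_g) * Δ < ε * (se * p_g) := by
        rw [div_mul_eq_mul_div, div_lt_iff₀ (by positivity)] at h; exact h
      rw [le_div_iff₀ hq]
      nlinarith
    rw [hmax]
    have hexp : -((s2 * τ)⁻¹) ^ 2 * τ ^ 2 = -(1/2) := by
      have hτne : τ ≠ 0 := ne_of_gt hτpos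
      field_simp
      nlinarith [hs2sq]
    rw [hexp, hinv]
    have : Real.exp (-(1/2)) * se = 1 := by
      rw [hse, ← Real.exp_add]; norm_num
    have hpne : p_g ≠ 0 := ne_of_gt hp0
    have hqne : (1:ℝ) - p_g ≠ 0 := ne_of_gt hq
    calc (1 - p_g) / p_g * Real.exp (-(1/2)) * (se * p_g * ε / (1 - p_g))
        = (Real.exp (-(1/2)) * se) * ε := by field_simp
      _ = 1 * ε := by rw [this]
      _ ≤ ε := by norm_num
  · -- case ε small
    push_neg at h
    set L := Real.log ((1 - p_g) * Δ / (p_g * ε)) with hL_def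
    have hargpos : 0 < (1 - p_g) * Δ / (p_g * ε) := by positivity
    have hLhalf : 1 / 2 ≤ L := by
      rw [hL_def, Real.le_log_iff_exp_le hargpos, Real.exp_half, ← hse_def]
      have h' : ε * (se * p_g) ≤ (1 - p_g) * Δ := by
        rw [div_mul_eq_mul_div, le_div_iff₀ (by positivity)] at h; exact h
      rw [le_div_iff₀ (by positivity)]
      nlinarith
    have hLpos : 0 < L := by linarith
    have hsL : 0 < Real.sqrt L := Real.sqrt_pos.2 hLpos
    have hτpos : 0 < τ := by rw [hτ]; positivity
    have hsLsq : Real.sqrt L * Real.sqrt L = L := Real.mul_self_sqrt hLpos.le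
    have hs2sL : 1 ≤ s2 * Real.sqrt L := by
      have : Real.sqrt (1/2) ≤ Real.sqrt L := Real.sqrt_le_sqrt hLhalf
      have h12 : Real.sqrt (1/2) = 1 / s2 := by
        rw [show (1:ℝ)/2 = 2⁻¹ by norm_num, Real.sqrt_inv, one_div]
      nlinarith [this, hs2]
    have hmax : max Δ (s2 * τ)⁻¹ = Δ := by
      apply max_eq_left
      rw [hτ]
      have hΔne : Δ ≠ 0 := ne_of_gt hΔ
      rw [show s2 * (1 / Δ * Real.sqrt L) = s2 * Real.sqrt L / Δ by ring]
      rw [inv_div]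
      rw [div_le_iff₀ (by nlinarith)]
      nlinarith
    rw [hmax, hτ]
    have hexp : -Δ ^ 2 * (1 / Δ * Real.sqrt L) ^ 2 = -L := by
      have hΔne : Δ ≠ 0 := ne_of_gt hΔ
      have h1 : (1 / Δ * Real.sqrt L) ^ 2 = (1 / Δ) ^ 2 * L := by
        rw [mul_pow, Real.sq_sqrt hLpos.le]
      rw [h1, show -Δ ^ 2 * ((1 / Δ) ^ 2 * L) = -(Δ / Δ) ^ 2 * L by ring,
        div_self hΔne]
      ring
    rw [hexp]
    have hexpL : Real.exp (-L) = p_g * ε / ((1 - p_g) * Δ) := by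
      rw [hL_def, Real.exp_neg, Real.exp_log hargpos, inv_div]
    rw [hexpL]
    have hpne : p_g ≠ 0 := ne_of_gt hp0
    have hqne : (1:ℝ) - p_g ≠ 0 := ne_of_gt hq
    have hΔne : Δ ≠ 0 := ne_of_gt hΔ
    calc (1 - p_g) / p_g * (p_g * ε / ((1 - p_g) * Δ)) * Δ = ε := by field_simp
      _ ≤ ε := le_refl ε
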